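/- Let φ = (φ_i)_{i≥1} be a sequence of real numbers, let 1 ≤ l ≤ n, and let M be a real number. Then Be_n^{φ^{l,M}}(x) = Be_n^φ(x) + M·Be_{n−1}^{φ^{{l}}}(x). -/
import Mathlib


open Polynomial

/-- The Bell polynomials: `Bell 0 = 1`, `Bell (n+1) = x·(Bell n + (Bell n)')`. -/
noncomputable def Bell : ℕ → Polynomial ℝ
  | 0 => 1
  | n + 1 => X * (Bell n + derivative (Bell n))

/-- `Phi φ n i` is the elementary symmetric polynomial of degree `i` in `φ 1, …, φ n`. -/
noncomputable def Phi (φ : ℕ → ℝ) (n i : ℕ) : ℝ :=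
  ∑ s ∈ Finset.powersetCard i (Finset.Icc 1 n), ∏ j ∈ s, φ j

/-- The generalized Bell polynomial `Be_n^φ = ∑_{j=0}^n Φ^n_{n-j} Be_j`. -/
noncomputable def genBell (φ : ℕ → ℝ) (n : ℕ) : Polynomial ℝ :=
  ∑ j ∈ Finset.range (n + 1), C (Phi φ n (n - j)) * Bell j

/-- The sequence `φ^{{l}}` obtained from `φ` by removing its `l`-th term
(sequences indexed from 1). -/
def removeIdx (φ : ℕ → ℝ) (l : ℕ) (i : ℕ) : ℝ := if i < l then φ i else φ (i + 1)

/-- The sequence `φ^{l,M}`, obtained by adding `M` to the `l`-th term of `φ`. -/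
def addAt (φ : ℕ → ℝ) (l : ℕ) (M : ℝ) (i : ℕ) : ℝ := φ i + if i = l then M else 0

/-- A finite set `U` of reals interlaces a finite set `V` if between any two consecutive
elements of `U` there lies exactly one element of `V`, and either `|U| = |V| + 1`, or
`|U| = |V|` and `max U < max V`. -/
def Interlaces (U V : Finset ℝ) : Prop :=
  (∀ u₁ ∈ U, ∀ u₂ ∈ U, u₁ < u₂ → (∀ u ∈ U, ¬(u₁ < u ∧ u < u₂)) →
    ∃! v, v ∈ V ∧ u₁ < v ∧ v < u₂) ∧
  (U.card = V.card + 1 ∨ (U.card = V.card ∧ U.max < V.max))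

/-- `zeta φ n k` is the `k`-th zero (in increasing order, `k` counted from 1) of the
generalized Bell polynomial `Be_n^φ`. -/
noncomputable def zeta (φ : ℕ → ℝ) (n k : ℕ) : ℝ :=
  ((genBell φ n).roots.toFinset.sort (· ≤ ·)).getD (k - 1) 0

section Aux
open Finset

lemma esymm_cons (a : ℝ) (s : Multiset ℝ) (k : ℕ) :
    (a ::ₘ s).esymm (k+1) = s.esymm (k+1) + a * s.esymm k := by
  simp [Multiset.esymm, Multiset.powersetCard_cons, Multiset.sum_map_mul_left]

lemma Phi_esymm (φ : ℕ → ℝ) (n i : ℕ) :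
    Phi φ n i = ((Finset.Icc 1 n).val.map φ).esymm i :=
  (Finset.esymm_map_val φ _ i).symm

lemma Phi_zero (φ : ℕ → ℝ) (n : ℕ) : Phi φ n 0 = 1 := by
  simp [Phi]

lemma erase_map_eq (φ : ℕ → ℝ) (l n : ℕ) (hl : 1 ≤ l) (hln : l ≤ n) :
    (((Finset.Icc 1 n).erase l).val.map φ)
      = ((Finset.Icc 1 (n-1)).val.map (removeIdx φ l)) := by
  have hemb : (Finset.Icc 1 (n-1)).map ⟨fun j => if j < l then j else j + 1,
      (strictMono_nat_of_lt_succ (by intro m; split <;> split <;> omega) : StrictMono _).injective⟩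
      = (Finset.Icc 1 n).erase l := by
    ext x
    simp only [mem_map, mem_Icc, mem_erase, Function.Embedding.coeFn_mk]
    constructor
    · rintro ⟨a, ha, rfl⟩; split <;> omega
    · rintro ⟨hx, h1, h2⟩
      refine ⟨if x < l then x else x - 1, by split <;> omega, ?_⟩
      rcases lt_or_ge x l with h | h
      · simp [h]
      · have h' : ¬ (x - 1 < l) := by omega
        simp only [if_neg (not_lt.2 h), if_neg h']
        omega
  rw [← hemb, Finset.map_val, Multiset.map_map]
  apply Multiset.map_congr rfl
  intro x _
  simp only [Function.comp_apply, Function.Embedding.coeFn_mk, removeIdx, apply_ite φ]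

lemma Phi_addAt (φ : ℕ → ℝ) (l n : ℕ) (hl : 1 ≤ l) (hln : l ≤ n) (M : ℝ) (k : ℕ) :
    Phi (addAt φ l M) n (k+1) = Phi φ n (k+1) + M * Phi (removeIdx φ l) (n-1) k := by
  have hlmem : l ∈ Finset.Icc 1 n := by simp [Finset.mem_Icc]; omega
  have hval : (Finset.Icc 1 n).val = l ::ₘ ((Finset.Icc 1 n).erase l).val := by
    rw [Finset.erase_val, Multiset.cons_erase (Finset.mem_def.mp hlmem)]
  set m' : Multiset ℝ := ((Finset.Icc 1 n).erase l).val.map φ with hm'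
  have hmapφ : (Finset.Icc 1 n).val.map φ = φ l ::ₘ m' := by rw [hval, Multiset.map_cons]
  have hmapA : (Finset.Icc 1 n).val.map (addAt φ l M) = (φ l + M) ::ₘ m' := by
    rw [hval, Multiset.map_cons]
    congr 1
    · simp [addAt]
    · apply Multiset.map_congr rfl
      intro x hx
      have : x ≠ l := (Finset.mem_erase.mp (Finset.mem_def.mpr hx)).1
      simp [addAt, this]
  rw [Phi_esymm, Phi_esymm, Phi_esymm, hmapA, hmapφ, esymm_cons, esymm_cons, hm',
    erase_map_eq φ l n hl hln]
  ring

end Aux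
/-- for `1 ≤ l ≤ n` and `M : ℝ`,
`Be_n^{φ^{l,M}} = Be_n^φ + M·Be_{n−1}^{φ^{{l}}}`. -/
theorem genBell_addAt (φ : ℕ → ℝ) (l n : ℕ) (hl : 1 ≤ l) (hln : l ≤ n) (M : ℝ) :
    genBell (addAt φ l M) n = genBell φ n + C M * genBell (removeIdx φ l) (n - 1) := by
  have hn : 1 ≤ n := le_trans hl hln
  have hrange : n - 1 + 1 = n := by omega
  unfold genBell
  rw [hrange, Finset.sum_range_succ, Finset.sum_range_succ (f := fun j => C (Phi φ n (n - j)) * Bell j)]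
  rw [Nat.sub_self, Phi_zero, Phi_zero, Finset.mul_sum]
  have hterm : ∀ j ∈ Finset.range n,
      C (Phi (addAt φ l M) n (n - j)) * Bell j
        = C (Phi φ n (n - j)) * Bell j + C M * (C (Phi (removeIdx φ l) (n-1) (n - 1 - j)) * Bell j) := by
    intro j hj
    have hj' : j < n := Finset.mem_range.mp hj
    have h1 : n - j = (n - 1 - j) + 1 := by omega
    rw [h1, Phi_addAt φ l n hl hln M (n - 1 - j), map_add, map_mul, add_mul]
    ring
  rw [Finset.sum_congr rfl hterm, Finset.sum_add_distrib]
  ring
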